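/- For any two finite connected simple graphs G and H, the gonality of the Cartesian (box) product satisfies gon(G □ H) ≤ min{gon(G)·|V(H)|, gon(H)·|V(G)|}. -/
import Mathlib


open Finset
open scoped Classical

namespace SimpleGraph

variable {V : Type*}

/-- A divisor `D : V → ℤ` is effective if all its values are nonnegative. -/
def Effective (D : V → ℤ) : Prop := ∀ v, 0 ≤ D v

/-- The Laplacian of `G` applied to `x : V → ℤ`:
`(lap G x) v = deg(v)·x(v) − ∑_{u ~ v} x(u) = ∑_{u ~ v} (x v − x u)`. -/
noncomputable def lap [Fintype V] (G : SimpleGraph V) (x : V → ℤ) : V → ℤ :=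
  fun v => ∑ u, if G.Adj v u then x v - x u else 0

/-- Two divisors are (linearly) equivalent if they differ by a Laplacian image. -/
def LinEquiv [Fintype V] (G : SimpleGraph V) (D D' : V → ℤ) : Prop :=
  ∃ x : V → ℤ, D - D' = G.lap x

/-- A divisor has positive rank if for every vertex `v`, subtracting one chip at `v`
yields a divisor equivalent to an effective divisor. -/
def PosRank [Fintype V] (G : SimpleGraph V) (D : V → ℤ) : Prop :=
  ∀ v : V, ∃ E : V → ℤ, Effective E ∧
    G.LinEquiv (D - fun u => if u = v then (1 : ℤ) else 0) E

/-- The gonality of `G`: the minimum degree of an effective divisor of positive rank. -/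
noncomputable def gonality [Fintype V] (G : SimpleGraph V) : ℕ :=
  sInf {n : ℕ | ∃ D : V → ℤ, Effective D ∧ G.PosRank D ∧ (∑ v, D v) = (n : ℤ)}

/-- The genus of `G`: `|E| − |V| + 1`. -/
noncomputable def genus [Fintype V] (G : SimpleGraph V) : ℤ :=
  (Nat.card G.edgeSet : ℤ) - (Fintype.card V : ℤ) + 1

end SimpleGraph

open SimpleGraph

section Aux

variable {V W : Type*} [Fintype V] [Fintype W]

lemma lap_boxProd_fst (G : SimpleGraph V) (H : SimpleGraph W) (x : V → ℤ) (p : V × W) :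
    (G □ H).lap (fun q => x q.1) p = G.lap x p.1 := by
  classical
  simp only [SimpleGraph.lap]
  rw [Fintype.sum_prod_type]
  refine Finset.sum_congr rfl (fun u' _ => ?_)
  have key : ∀ w' : W, (if (G □ H).Adj p (u', w') then x p.1 - x u' else 0)
      = if p.2 = w' then (if G.Adj p.1 u' then x p.1 - x u' else 0) else 0 := by
    intro w'
    rw [SimpleGraph.boxProd_adj]
    by_cases h4 : p.1 = u'
    · have hz : x p.1 - x u' = 0 := by rw [h4]; ring
      by_cases h1 : G.Adj p.1 u' <;> by_cases h2 : p.2 = w' <;> simp_all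
    · by_cases h1 : G.Adj p.1 u' <;> by_cases h2 : p.2 = w' <;> simp_all
  rw [Finset.sum_congr rfl (fun w' _ => key w')]
  simp

lemma lap_boxProd_snd (G : SimpleGraph V) (H : SimpleGraph W) (x : W → ℤ) (p : V × W) :
    (G □ H).lap (fun q => x q.2) p = H.lap x p.2 := by
  classical
  simp only [SimpleGraph.lap]
  rw [Fintype.sum_prod_type_right]
  refine Finset.sum_congr rfl (fun w' _ => ?_)
  have key : ∀ u' : V, (if (G □ H).Adj p (u', w') then x p.2 - x w' else 0)
      = if p.1 = u' then (if H.Adj p.2 w' then x p.2 - x w' else 0) else 0 := by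
    intro u'
    rw [SimpleGraph.boxProd_adj]
    by_cases h4 : p.2 = w'
    · have hz : x p.2 - x w' = 0 := by rw [h4]; ring
      by_cases h1 : H.Adj p.2 w' <;> by_cases h2 : p.1 = u' <;> simp_all
    · by_cases h1 : H.Adj p.2 w' <;> by_cases h2 : p.1 = u' <;> simp_all
  rw [Finset.sum_congr rfl (fun u' _ => key u')]
  simp

lemma gonality_set_nonempty (G : SimpleGraph V) :
    {n : ℕ | ∃ D : V → ℤ, Effective D ∧ G.PosRank D ∧ (∑ v, D v) = (n : ℤ)}.Nonempty := by
  classical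
  refine ⟨Fintype.card V, fun _ => 1, fun v => by norm_num, ?_, by simp⟩
  intro v
  refine ⟨(fun _ => (1 : ℤ)) - fun u => if u = v then 1 else 0, ?_, 0, ?_⟩
  · intro u
    by_cases h : u = v <;> simp [h]
  · funext u
    simp [SimpleGraph.lap]

lemma posRank_fst (G : SimpleGraph V) (H : SimpleGraph W) (D : V → ℤ)
    (hP : G.PosRank D) : (G □ H).PosRank (fun p => D p.1) := by
  classical
  rintro ⟨v, w⟩
  obtain ⟨E, hE, x, hx⟩ := hP v
  refine ⟨fun p => E p.1 + (if p.1 = v ∧ p.2 ≠ w then 1 else 0),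
    fun p => add_nonneg (hE p.1) (by split <;> norm_num), fun q => x q.1, ?_⟩
  funext p
  have h1 := congrFun hx p.1
  have h2 := lap_boxProd_fst G H x p
  simp only [Pi.sub_apply] at h1 ⊢
  rw [h2, ← h1]
  obtain ⟨a, b⟩ := p
  by_cases h : a = v <;> by_cases h' : b = w <;>
    simp [h, h', Prod.ext_iff] <;> ring

lemma posRank_snd (G : SimpleGraph V) (H : SimpleGraph W) (D : W → ℤ)
    (hP : H.PosRank D) : (G □ H).PosRank (fun p => D p.2) := by
  classical
  rintro ⟨v, w⟩
  obtain ⟨E, hE, x, hx⟩ := hP w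
  refine ⟨fun p => E p.2 + (if p.2 = w ∧ p.1 ≠ v then 1 else 0),
    fun p => add_nonneg (hE p.2) (by split <;> norm_num), fun q => x q.2, ?_⟩
  funext p
  have h1 := congrFun hx p.2
  have h2 := lap_boxProd_snd G H x p
  simp only [Pi.sub_apply] at h1 ⊢
  rw [h2, ← h1]
  obtain ⟨a, b⟩ := p
  by_cases h : a = v <;> by_cases h' : b = w <;>
    simp [h, h', Prod.ext_iff] <;> ring

lemma gonality_mem (G : SimpleGraph V) :
    ∃ D : V → ℤ, Effective D ∧ G.PosRank D ∧ (∑ v, D v) = (G.gonality : ℤ) :=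
  Nat.sInf_mem (gonality_set_nonempty G)

end Aux

theorem gonality_boxProd_le {V W : Type*} [Fintype V] [Fintype W]
    (G : SimpleGraph V) (H : SimpleGraph W) (hG : G.Connected) (hH : H.Connected) :
    (G □ H).gonality ≤ min (G.gonality * Fintype.card W) (H.gonality * Fintype.card V) := by
  classical
  obtain ⟨DG, hDG, hPG, hdegG⟩ := gonality_mem G
  obtain ⟨DH, hDH, hPH, hdegH⟩ := gonality_mem H
  refine le_min ?_ ?_
  · apply Nat.sInf_le
    refine ⟨fun p => DG p.1, fun p => hDG p.1, posRank_fst G H DG hPG, ?_⟩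
    rw [Fintype.sum_prod_type]
    simp only [Finset.sum_const, Finset.card_univ, nsmul_eq_mul]
    push_cast
    rw [← Finset.mul_sum, hdegG]
    ring
  · apply Nat.sInf_le
    refine ⟨fun p => DH p.2, fun p => hDH p.2, posRank_snd G H DH hPH, ?_⟩
    rw [Fintype.sum_prod_type_right]
    simp only [Finset.sum_const, Finset.card_univ, nsmul_eq_mul]
    push_cast
    rw [← Finset.mul_sum, hdegH]
    ring
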